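/- Let λ, μ : ℤ → ℂ be arbitrary functions and let T be the operator on ℓ²(ℤ) with domain the finitely supported sequences D, defined by T e_n = λ(n) e_n + μ(n) e_{n+1} (equivalently (T u)_n = λ(n) u_n + μ(n−1) u_{n−1} for u ∈ D). Then the adjoint T* has domain Dom T* = { v ∈ ℓ²(ℤ) : the sequence ( conj(λ(n)) v_n + conj(μ(n)) v_{n+1} )_{n∈ℤ} lies in ℓ²(ℤ) } and acts there by (T* v)_n = conj(λ(n)) v_n + conj(μ(n)) v_{n+1}; that is, (λ(N) + Wμ(N)|_D)* = λ̄(N) ∔ μ̄(N)W*, the operator with maximal domain. -/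

import Mathlib

open scoped ComplexConjugate

private lemma finsupp_summable {f : ℤ → ℂ} (hf : (Function.support f).Finite) : Summable f :=
  summable_of_ne_finset_zero (s := hf.toFinset) fun n hn => by
    by_contra h; exact hn (hf.mem_toFinset.mpr h)

/-- Let `λ, μ : ℤ → ℂ` and let `T` be the operator on `ℓ²(ℤ)` with domain
the finitely supported sequences, `T e_n = λ(n) e_n + μ(n) e_{n+1}` (equivalently
`(T u)_n = λ(n)u_n + μ(n-1)u_{n-1}`).  Then the adjoint `T*` has domain
`{v ∈ ℓ²(ℤ) : (conj(λ(n))v_n + conj(μ(n))v_{n+1})_n ∈ ℓ²(ℤ)}` and acts there by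
`(T* v)_n = conj(λ(n))v_n + conj(μ(n))v_{n+1}`; that is,
`(λ(N) + Wμ(N)|_D)* = λ̄(N) ∔ μ̄(N)W*`, the operator with maximal domain. -/
theorem adjoint_of_diagonal_plus_shift
    (lam mu : ℤ → ℂ)
    (T : lp (fun _ : ℤ => ℂ) 2 →ₗ.[ℂ] lp (fun _ : ℤ => ℂ) 2)
    (hdom : ∀ x : lp (fun _ : ℤ => ℂ) 2,
      x ∈ T.domain ↔ (Function.support (x : ℤ → ℂ)).Finite)
    (hT : ∀ (u : T.domain) (n : ℤ),
      (T u : ℤ → ℂ) n = lam n * (u : lp (fun _ : ℤ => ℂ) 2) n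
        + mu (n - 1) * (u : lp (fun _ : ℤ => ℂ) 2) (n - 1)) :
    (∀ v : lp (fun _ : ℤ => ℂ) 2,
        v ∈ T.adjoint.domain ↔
          Memℓp (fun n : ℤ =>
            (starRingEnd ℂ) (lam n) * v n + (starRingEnd ℂ) (mu n) * v (n + 1)) 2) ∧
      ∀ (v : T.adjoint.domain) (n : ℤ),
        (T.adjoint v : ℤ → ℂ) n
          = (starRingEnd ℂ) (lam n) * (v : lp (fun _ : ℤ => ℂ) 2) n
            + (starRingEnd ℂ) (mu n) * (v : lp (fun _ : ℤ => ℂ) 2) (n + 1) := by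
  classical
  -- density of the domain
  have hdense : Dense (T.domain : Set (lp (fun _ : ℤ => ℂ) 2)) := by
    intro f
    have hsum := lp.hasSum_single (p := 2) ENNReal.ofNat_ne_top f
    refine mem_closure_of_tendsto hsum (Filter.Eventually.of_forall fun s => ?_)
    rw [SetLike.mem_coe, hdom]
    refine s.finite_toSet.subset fun m hm => ?_
    rw [Function.mem_support] at hm
    by_contra hms
    apply hm
    rw [lp.coeFn_sum, Finset.sum_apply]
    exact Finset.sum_eq_zero fun i hi =>
      lp.single_apply_ne 2 i _ (fun h => hms (h ▸ hi))
  -- the key computation: ⟪v, T u⟫ = ∑' n, conj (w0 v n) * u n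
  have key : ∀ (v : lp (fun _ : ℤ => ℂ) 2) (u : T.domain),
      (inner ℂ v (T u : lp (fun _ : ℤ => ℂ) 2) : ℂ)
        = ∑' n : ℤ, conj (conj (lam n) * v n + conj (mu n) * v (n + 1))
            * (u : lp (fun _ : ℤ => ℂ) 2) n := by
    intro v u
    have hu : (Function.support ((u : lp (fun _ : ℤ => ℂ) 2) : ℤ → ℂ)).Finite :=
      (hdom _).mp u.2
    set U : ℤ → ℂ := ((u : lp (fun _ : ℤ => ℂ) 2) : ℤ → ℂ) with hU
    have hs1 : Summable (fun n : ℤ => conj (v n) * (lam n * U n)) := by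
      refine finsupp_summable (hu.subset fun n hn => ?_)
      rw [Function.mem_support] at hn ⊢
      intro h; apply hn; rw [h]; ring
    have hs2 : Summable (fun n : ℤ => conj (v (n + 1)) * (mu n * U n)) := by
      refine finsupp_summable (hu.subset fun n hn => ?_)
      rw [Function.mem_support] at hn ⊢
      intro h; apply hn; rw [h]; ring
    have hs2' : Summable (fun n : ℤ => conj (v n) * (mu (n - 1) * U (n - 1))) := by
      refine ((Equiv.addRight (1 : ℤ)).summable_iff
        (f := fun n : ℤ => conj (v n) * (mu (n - 1) * U (n - 1)))).mp ?_
      refine hs2.congr fun n => ?_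
      simp [Function.comp]
    calc (inner ℂ v (T u : lp (fun _ : ℤ => ℂ) 2) : ℂ)
        = ∑' n : ℤ, conj (v n) * (T u : ℤ → ℂ) n := by
          rw [lp.inner_eq_tsum]; exact tsum_congr fun n => mul_comm _ _
      _ = ∑' n : ℤ, (conj (v n) * (lam n * U n)
            + conj (v n) * (mu (n - 1) * U (n - 1))) := by
          refine tsum_congr fun n => ?_
          rw [hT u n]; ring
      _ = (∑' n : ℤ, conj (v n) * (lam n * U n))
            + ∑' n : ℤ, conj (v n) * (mu (n - 1) * U (n - 1)) :=
          Summable.tsum_add hs1 hs2'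
      _ = (∑' n : ℤ, conj (v n) * (lam n * U n))
            + ∑' n : ℤ, conj (v (n + 1)) * (mu n * U n) := by
          congr 1
          rw [← (Equiv.addRight (1 : ℤ)).tsum_eq
            (fun n : ℤ => conj (v n) * (mu (n - 1) * U (n - 1)))]
          simp
      _ = ∑' n : ℤ, (conj (v n) * (lam n * U n) + conj (v (n + 1)) * (mu n * U n)) :=
          (Summable.tsum_add hs1 hs2).symm
      _ = ∑' n : ℤ, conj (conj (lam n) * v n + conj (mu n) * v (n + 1)) * U n := by
          refine tsum_congr fun n => ?_
          simp only [map_add, map_mul, Complex.conj_conj]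
          ring
  -- membership in e_n of the domain
  have hen : ∀ n : ℤ, lp.single 2 n (1 : ℂ) ∈ T.domain := by
    intro n
    rw [hdom]
    refine (Set.finite_singleton n).subset fun m hm => ?_
    rw [Function.mem_support] at hm
    by_contra h
    exact hm (lp.single_apply_ne 2 n _ h)
  -- pointwise formula for the adjoint
  have hz : ∀ (v : T.adjoint.domain) (n : ℤ),
      (T.adjoint v : ℤ → ℂ) n
        = conj (lam n) * (v : lp (fun _ : ℤ => ℂ) 2) n
          + conj (mu n) * (v : lp (fun _ : ℤ => ℂ) 2) (n + 1) := by
    intro v n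
    have h1 := (LinearPMap.adjoint_isFormalAdjoint hdense) v ⟨lp.single 2 n 1, hen n⟩
    rw [key] at h1
    rw [lp.inner_single_right] at h1
    have hR : (∑' m : ℤ, conj (conj (lam m) * (v : lp (fun _ : ℤ => ℂ) 2) m
          + conj (mu m) * (v : lp (fun _ : ℤ => ℂ) 2) (m + 1))
          * ((⟨lp.single 2 n 1, hen n⟩ : T.domain) : lp (fun _ : ℤ => ℂ) 2) m)
        = conj (conj (lam n) * (v : lp (fun _ : ℤ => ℂ) 2) n
          + conj (mu n) * (v : lp (fun _ : ℤ => ℂ) 2) (n + 1)) := by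
      rw [tsum_eq_single n]
      · show _ * (lp.single 2 n (1 : ℂ) : ℤ → ℂ) n = _
        rw [lp.single_apply_self, mul_one]
      · intro m hm
        show _ * (lp.single 2 n (1 : ℂ) : ℤ → ℂ) m = 0
        rw [lp.single_apply_ne 2 n _ hm, mul_zero]
    rw [hR] at h1
    have h2 : conj ((T.adjoint v : ℤ → ℂ) n)
        = conj (conj (lam n) * (v : lp (fun _ : ℤ => ℂ) 2) n
          + conj (mu n) * (v : lp (fun _ : ℤ => ℂ) 2) (n + 1)) := by
      simpa [RCLike.inner_apply] using h1
    exact star_injective h2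
  refine ⟨fun v => ⟨fun hv => ?_, fun hv => ?_⟩, hz⟩
  · -- forward: function equals the adjoint's value, which is in lp
    have : (fun n : ℤ => conj (lam n) * v n + conj (mu n) * v (n + 1))
        = ((T.adjoint ⟨v, hv⟩ : lp (fun _ : ℤ => ℂ) 2) : ℤ → ℂ) :=
      funext fun n => (hz ⟨v, hv⟩ n).symm
    rw [this]
    exact lp.memℓp _
  · -- backward: exhibit the candidate adjoint vector
    refine LinearPMap.mem_adjoint_domain_of_exists v ⟨(⟨_, hv⟩ : lp (fun _ : ℤ => ℂ) 2),
      fun u => ?_⟩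
    rw [key v u, lp.inner_eq_tsum]
    exact tsum_congr fun n => mul_comm _ _
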